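/- Let X be a separable metric space, {μₙ} probability measures on X, and suppose that for some fixed j with radius r > 0 and dense sequence {xᵢ}, the set {k ∈ ℕ : ∃n, μₙ(⋃_{i=0}^{k} B(xᵢ, r)) ≤ 1 − ε} is infinite for some ε > 0. Then there exists a subsequence {μ_{n_k}} and a strictly increasing sequence {m_k} with μ_{n_k}(⋃_{i=0}^{m_k} B(xᵢ, r)) ≤ 1 − ε for all k, and consequently no subsequence of {μ_{n_k}} can weakly converge to a probability measure μ, since otherwise the Portmanteau inequality liminf_k μ_{n_k}(U) ≥ μ(U) for open U would force μ(X) ≤ 1 − ε < 1. -/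

import Mathlib

open MeasureTheory Metric Filter Topology ENNReal

theorem stmt14 {X : Type*} [MetricSpace X] [TopologicalSpace.SeparableSpace X]
    [MeasurableSpace X] [BorelSpace X]
    (μ : ℕ → Measure X) [∀ n, IsProbabilityMeasure (μ n)]
    (x : ℕ → X) (hx : DenseRange x) (r : ℝ) (hr : 0 < r)
    (ε : ℝ) (hε : 0 < ε)
    (hinf : {k : ℕ | ∃ n : ℕ,
        (μ n (⋃ i ∈ Finset.range (k + 1), ball (x i) r)).toReal ≤ 1 - ε}.Infinite) :
    ∃ n m : ℕ → ℕ, StrictMono n ∧ StrictMono m ∧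
      (∀ k, (μ (n k) (⋃ i ∈ Finset.range (m k + 1), ball (x i) r)).toReal ≤ 1 - ε) ∧
      ∀ φ : ℕ → ℕ, StrictMono φ → ∀ ν : Measure X, IsProbabilityMeasure ν →
        ¬ (∀ f : X → ℝ, Continuous f → (∃ M : ℝ, ∀ y, |f y| ≤ M) →
            Tendsto (fun k => ∫ y, f y ∂(μ (n (φ k)))) atTop (nhds (∫ y, f y ∂ν))) := by
  classical
  set s : ℕ → Set X := fun k => ⋃ i ∈ Finset.range (k + 1), ball (x i) r with hs
  have smono : Monotone s := by
    intro a b hab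
    intro y hy
    simp only [hs, Set.mem_iUnion, exists_prop] at hy ⊢
    obtain ⟨i, hi, hyi⟩ := hy
    exact ⟨i, Finset.mem_range.mpr (by have := Finset.mem_range.mp hi; omega), hyi⟩
  have sopen : ∀ k, IsOpen (s k) := fun k => isOpen_biUnion fun i _ => isOpen_ball
  have sunion : (⋃ k, s k) = Set.univ := by
    ext y
    simp only [Set.mem_iUnion, Set.mem_univ, iff_true]
    obtain ⟨i, hi⟩ := hx.exists_dist_lt y hr
    exact ⟨i, Set.mem_biUnion (Finset.self_mem_range_succ i) (by simpa [mem_ball, dist_comm] using hi)⟩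
  -- For any measure ν, ν (s k) → ν univ
  have tendS : ∀ (ν : Measure X), Tendsto (fun k => ν (s k)) atTop (𝓝 (ν Set.univ)) := by
    intro ν
    have h0 := tendsto_measure_iUnion_atTop (μ := ν) smono
    rw [sunion] at h0
    exact h0
  have tend : ∀ nn : ℕ, Tendsto (fun k => (μ nn (s k)).toReal) atTop (𝓝 1) := by
    intro nn
    have h1 : Tendsto (fun k => μ nn (s k)) atTop (𝓝 1) := by
      have := tendS (μ nn); rwa [measure_univ] at this
    have := (ENNReal.tendsto_toReal (by simp : (1 : ℝ≥0∞) ≠ ⊤)).comp h1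
    exact this
  have hle1 : (0 : ℝ) ≤ 1 - ε := by
    obtain ⟨k0, n0, hn0⟩ := hinf.nonempty
    exact le_trans ENNReal.toReal_nonneg hn0
  -- key extraction step
  have key : ∀ p : ℕ × ℕ, ∃ q : ℕ × ℕ, p.1 < q.1 ∧ p.2 < q.2 ∧
      (μ q.1 (s q.2)).toReal ≤ 1 - ε := by
    intro ⟨N, M⟩
    have hev : ∀ nn : ℕ, ∃ K, ∀ k ≥ K, 1 - ε < (μ nn (s k)).toReal := by
      intro nn
      have := (tend nn).eventually (eventually_gt_nhds (by linarith : 1 - ε < 1))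
      exact eventually_atTop.mp this
    choose K hK using hev
    set K0 := (Finset.range (N + 1)).sup K with hK0
    obtain ⟨kk, hkkmem, hkkgt⟩ := hinf.exists_gt (max K0 M)
    obtain ⟨nn, hnn⟩ := hkkmem
    refine ⟨(nn, kk), ?_, lt_of_le_of_lt (le_max_right _ _) hkkgt, hnn⟩
    by_contra hcon
    push_neg at hcon
    have hKnn : K nn ≤ K0 := Finset.le_sup (by simp; omega)
    have := hK nn kk (le_trans hKnn (le_trans (le_max_left _ _) hkkgt.le))
    exact absurd hnn (not_le.mpr this)
  -- build the sequences
  let g : ℕ × ℕ → ℕ × ℕ := fun p => (key p).choose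
  let F : ℕ → ℕ × ℕ := fun j => g^[j + 1] (0, 0)
  have hFsucc : ∀ j, F (j + 1) = g (F j) := fun j => Function.iterate_succ_apply' g (j + 1) (0, 0)
  have hFspec : ∀ j, (g^[j] (0,0)).1 < (F j).1 ∧ (g^[j] (0,0)).2 < (F j).2 ∧
      (μ (F j).1 (s (F j).2)).toReal ≤ 1 - ε := by
    intro j
    have : F j = g (g^[j] (0,0)) := Function.iterate_succ_apply' g j (0, 0)
    rw [this]
    exact (key (g^[j] (0,0))).choose_spec
  refine ⟨fun j => (F j).1, fun j => (F j).2, ?_, ?_, fun j => (hFspec j).2.2, ?_⟩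
  · apply strictMono_nat_of_lt_succ
    intro j
    have := (hFspec (j + 1)).1
    simpa [F] using this
  · apply strictMono_nat_of_lt_succ
    intro j
    have := (hFspec (j + 1)).2.1
    simpa [F] using this
  · intro φ hφ ν hν h
    set P : ℕ → ProbabilityMeasure X := fun k => ⟨μ ((F (φ k)).1), inferInstance⟩ with hP
    set Q : ProbabilityMeasure X := ⟨ν, hν⟩ with hQ
    have htend : Tendsto P atTop (𝓝 Q) := by
      rw [ProbabilityMeasure.tendsto_iff_forall_integral_tendsto]
      intro f
      exact h f f.continuous ⟨‖f‖, fun y => by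
        simpa [Real.norm_eq_abs] using f.norm_coe_le_norm y⟩
    have hKle : ∀ K : ℕ, ν (s K) ≤ ENNReal.ofReal (1 - ε) := by
      intro K
      have h1 := ProbabilityMeasure.le_liminf_measure_open_of_tendsto htend (sopen K)
      have h2 : ∀ᶠ k in atTop, ((P k : Measure X)) (s K) ≤ ENNReal.ofReal (1 - ε) := by
        filter_upwards [eventually_ge_atTop K] with k hk
        have hm : K ≤ (F (φ k)).2 := by
          calc K ≤ k := hk
          _ ≤ φ k := hφ.le_apply
          _ ≤ (F (φ k)).2 := (strictMono_nat_of_lt_succ (fun j => by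
              exact (hFspec (j + 1)).2.1)).le_apply
        have hsub : s K ⊆ s ((F (φ k)).2) := smono hm
        have hmeas : (μ ((F (φ k)).1)) (s K) ≤ (μ ((F (φ k)).1)) (s ((F (φ k)).2)) :=
          measure_mono hsub
        refine le_trans hmeas ?_
        rw [ENNReal.le_ofReal_iff_toReal_le (measure_ne_top _ _) hle1]
        exact (hFspec (φ k)).2.2
      have h3 : (atTop.liminf fun k => ((P k : Measure X)) (s K)) ≤ ENNReal.ofReal (1 - ε) :=
        liminf_le_of_frequently_le h2.frequently
      exact le_trans h1 h3
    have hνlim := tendS ν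
    have : ν Set.univ ≤ ENNReal.ofReal (1 - ε) :=
      le_of_tendsto hνlim (Eventually.of_forall hKle)
    rw [measure_univ] at this
    have hlt : ENNReal.ofReal (1 - ε) < 1 := by
      rw [ENNReal.ofReal_lt_one]
      linarith
    exact absurd this (not_le.mpr hlt)
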